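/- For every countable ordinal α and every natural number p, there exists a compact countable subset K of the metric space ℚ (with the metric inherited from ℝ) such that the α-th Cantor–Bendixson derivative K^(α) has exactly p elements. -/

import Mathlib

open Ordinal Set

/-- The `α`-th Cantor–Bendixson derivative of a set `A`, defined by transfinite
recursion: `A^(0) = A`, `A^(β+1) = (A^(β))'` (derived set in the ambient space),
and `A^(λ) = ⋂_{γ<λ} A^(γ)` at nonzero limit ordinals. -/
noncomputable def cbDeriv {X : Type*} [TopologicalSpace X] (A : Set X) (o : Ordinal) : Set X :=
  Ordinal.limitRecOn o A (fun _ ih => derivedSet ih)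
    (fun o _ ih => ⋂ (β : Ordinal) (h : β < o), ih β h)

/-- `A` has Cantor–Bendixson characteristic `(α, p)`: `α` is the least ordinal such
that the `α`-th Cantor–Bendixson derivative of `A` is finite, and that derivative has
exactly `p` elements. -/
def HasCBChar {X : Type*} [TopologicalSpace X] (A : Set X) (α : Ordinal) (p : ℕ) : Prop :=
  (cbDeriv A α).Finite ∧ (∀ β < α, ¬ (cbDeriv A β).Finite) ∧ (cbDeriv A α).ncard = p

section basic
variable {X : Type*} [TopologicalSpace X]

@[simp] lemma cbDeriv_zero (A : Set X) : cbDeriv A 0 = A :=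
  limitRecOn_zero ..

@[simp] lemma cbDeriv_succ (A : Set X) (o : Ordinal) :
    cbDeriv A (Order.succ o) = derivedSet (cbDeriv A o) :=
  limitRecOn_succ ..

lemma cbDeriv_limit (A : Set X) {o : Ordinal} (ho : Order.IsSuccLimit o) :
    cbDeriv A o = ⋂ (β : Ordinal) (_ : β < o), cbDeriv A β :=
  limitRecOn_limit _ _ _ _ ho

end basic

section basic2
variable {X : Type*} [TopologicalSpace X]

lemma cbDeriv_mono {A B : Set X} (h : A ⊆ B) (o : Ordinal) :
    cbDeriv A o ⊆ cbDeriv B o := by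
  induction o using Ordinal.induction with
  | h o IH =>
    rcases Ordinal.zero_or_succ_or_isSuccLimit o with rfl | ⟨a, rfl⟩ | ho
    · simpa using h
    · rw [cbDeriv_succ, cbDeriv_succ]
      exact derivedSet_mono _ _ (IH a (Order.lt_succ a))
    · rw [cbDeriv_limit _ ho, cbDeriv_limit _ ho]
      exact iInter₂_mono fun β hβ => IH β hβ

lemma cbDeriv_empty (o : Ordinal) : cbDeriv (∅ : Set X) o = ∅ := by
  induction o using Ordinal.induction with
  | h o IH =>
    rcases Ordinal.zero_or_succ_or_isSuccLimit o with rfl | ⟨a, rfl⟩ | ho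
    · simp
    · rw [cbDeriv_succ, IH a (Order.lt_succ a)]
      rw [eq_empty_iff_forall_notMem]
      intro x hx
      exact absurd (derivedSet_subset_closure _ hx) (by simp)
    · rw [cbDeriv_limit _ ho, eq_empty_iff_forall_notMem]
      intro x hx
      have := mem_iInter₂.1 hx 0 ho.pos
      simp only [IH 0 ho.pos] at this
      exact this

lemma cbDeriv_subset_closure (A : Set X) (o : Ordinal) : cbDeriv A o ⊆ closure A := by
  induction o using Ordinal.induction with
  | h o IH =>
    rcases Ordinal.zero_or_succ_or_isSuccLimit o with rfl | ⟨a, rfl⟩ | ho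
    · simpa using subset_closure
    · rw [cbDeriv_succ]
      refine (derivedSet_subset_closure _).trans ?_
      rw [← closure_closure (s := A)]
      exact closure_mono (IH a (Order.lt_succ a))
    · rw [cbDeriv_limit _ ho]
      refine subset_trans (fun x hx => ?_) (subset_closure (s := A))
      have := mem_iInter₂.1 hx 0 ho.pos
      simpa using this

variable [T1Space X]

lemma isClosed_cbDeriv {A : Set X} (hA : IsClosed A) (o : Ordinal) :
    IsClosed (cbDeriv A o) := by
  induction o using Ordinal.induction with
  | h o IH =>
    rcases Ordinal.zero_or_succ_or_isSuccLimit o with rfl | ⟨a, rfl⟩ | ho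
    · simpa using hA
    · rw [cbDeriv_succ]; exact isClosed_derivedSet _
    · rw [cbDeriv_limit _ ho]
      exact isClosed_iInter fun β => isClosed_iInter fun hβ => IH β hβ

lemma cbDeriv_antitone {A : Set X} (hA : IsClosed A) {o₁ o₂ : Ordinal} (h : o₁ ≤ o₂) :
    cbDeriv A o₂ ⊆ cbDeriv A o₁ := by
  induction o₂ using Ordinal.induction with
  | h o IH =>
    rcases eq_or_lt_of_le h with rfl | hlt
    · exact subset_rfl
    rcases Ordinal.zero_or_succ_or_isSuccLimit o with rfl | ⟨a, rfl⟩ | ho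
    · exact absurd hlt (not_lt_zero (a := o₁))
    · have h1 : o₁ ≤ a := Order.lt_succ_iff.mp hlt
      refine subset_trans ?_ (IH a (Order.lt_succ a) h1)
      rw [cbDeriv_succ]
      have : IsClosed (cbDeriv A a) := isClosed_cbDeriv hA a
      exact (isClosed_iff_derivedSet_subset _).mp this
    · rw [cbDeriv_limit _ ho]
      exact iInter₂_subset o₁ hlt

end basic2

section locality
variable {X : Type*} [TopologicalSpace X]

lemma derivedSet_inter_clopen {S U : Set X} (hU : IsClopen U) :
    derivedSet (S ∩ U) = derivedSet S ∩ U := by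
  apply subset_antisymm
  · refine subset_inter (derivedSet_mono _ _ inter_subset_left) ?_
    exact (derivedSet_subset_closure _).trans
      ((closure_mono inter_subset_right).trans hU.isClosed.closure_subset)
  · rintro x ⟨hx, hxU⟩
    rw [mem_derivedSet, accPt_iff_nhds] at hx ⊢
    intro V hV
    obtain ⟨y, ⟨hyV, hyS⟩, hyx⟩ := hx (V ∩ U) (Filter.inter_mem hV (hU.isOpen.mem_nhds hxU))
    exact ⟨y, ⟨hyV.1, hyS, hyV.2⟩, hyx⟩

lemma cbDeriv_inter_clopen {A U : Set X} (hU : IsClopen U) (o : Ordinal) :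
    cbDeriv (A ∩ U) o = cbDeriv A o ∩ U := by
  induction o using Ordinal.induction with
  | h o IH =>
    rcases Ordinal.zero_or_succ_or_isSuccLimit o with rfl | ⟨a, rfl⟩ | ho
    · simp
    · rw [cbDeriv_succ, cbDeriv_succ, IH a (Order.lt_succ a), derivedSet_inter_clopen hU]
    · rw [cbDeriv_limit _ ho, cbDeriv_limit _ ho]
      ext x
      simp only [mem_iInter, mem_inter_iff]
      constructor
      · intro hx
        refine ⟨fun β hβ => (IH β hβ ▸ hx β hβ).1, ((IH 0 ho.pos) ▸ hx 0 ho.pos).2⟩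
      · rintro ⟨h1, h2⟩ β hβ
        rw [IH β hβ]
        exact ⟨h1 β hβ, h2⟩

lemma derivedSet_image {Y : Type*} [TopologicalSpace Y] (e : X ≃ₜ Y) (A : Set X) :
    derivedSet (e '' A) = e '' derivedSet A := by
  apply subset_antisymm
  · intro y hy
    refine ⟨e.symm y, ?_, by simp⟩
    have h1 : e.symm '' derivedSet (e '' A) ⊆ derivedSet (e.symm '' (e '' A)) :=
      e.symm.continuous.image_derivedSet e.symm.injective
    have h2 : e.symm '' (e '' A) = A := by rw [← Set.image_comp]; simp
    rw [h2] at h1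
    exact h1 ⟨y, hy, rfl⟩
  · exact e.continuous.image_derivedSet e.injective

lemma cbDeriv_image {Y : Type*} [TopologicalSpace Y] (e : X ≃ₜ Y) (A : Set X) (o : Ordinal) :
    cbDeriv (e '' A) o = e '' cbDeriv A o := by
  induction o using Ordinal.induction with
  | h o IH =>
    rcases Ordinal.zero_or_succ_or_isSuccLimit o with rfl | ⟨a, rfl⟩ | ho
    · simp
    · rw [cbDeriv_succ, cbDeriv_succ, IH a (Order.lt_succ a), derivedSet_image]
    · rw [cbDeriv_limit _ ho, cbDeriv_limit _ ho,
        Set.image_iInter₂ e.bijective]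
      exact iInter₂_congr fun β hβ => IH β hβ

lemma derivedSet_singleton [T1Space X] (x : X) : derivedSet ({x} : Set X) = ∅ := by
  rw [eq_empty_iff_forall_notMem]
  intro y hy
  rw [mem_derivedSet, accPt_iff_nhds] at hy
  by_cases hxy : y = x
  · obtain ⟨z, ⟨_, hz⟩, hzy⟩ := hy Set.univ Filter.univ_mem
    rw [mem_singleton_iff] at hz
    exact hzy (hz.trans hxy.symm)
  · obtain ⟨z, ⟨hz1, hz2⟩, _⟩ := hy {x}ᶜ (isOpen_compl_singleton.mem_nhds hxy)
    exact hz1 hz2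

end locality

section rat

/-- The affine homeomorphism `x ↦ c + r * x` of `ℚ`. -/
noncomputable def affQ (c r : ℚ) (hr : r ≠ 0) : ℚ ≃ₜ ℚ :=
  (Homeomorph.mulLeft₀ r hr).trans (Homeomorph.addLeft c)

lemma affQ_apply (c r : ℚ) (hr : r ≠ 0) (x : ℚ) : affQ c r hr x = c + r * x := rfl

/-- The "interval" in `ℚ` cut out by two real numbers. -/
def QI (a b : ℝ) : Set ℚ := {q : ℚ | a < (q : ℝ) ∧ (q : ℝ) < b}

lemma isClopen_QI {a b : ℝ} (ha : Irrational a) (hb : Irrational b) :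
    IsClopen (QI a b) := by
  constructor
  · rw [← isOpen_compl_iff]
    have : (QI a b)ᶜ = ((↑) : ℚ → ℝ) ⁻¹' (Iio a ∪ Ioi b) := by
      ext q
      simp only [QI, mem_compl_iff, mem_setOf_eq, mem_preimage, mem_union, mem_Iio, mem_Ioi,
        not_and_or, not_lt]
      constructor
      · rintro (h | h)
        · exact Or.inl (lt_of_le_of_ne h fun he => ha ⟨q, he⟩)
        · exact Or.inr (lt_of_le_of_ne h fun he => hb ⟨q, he.symm⟩)
      · rintro (h | h)
        · exact Or.inl h.le
        · exact Or.inr h.le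
    rw [this]
    exact (isOpen_Iio.union isOpen_Ioi).preimage Rat.continuous_coe_real
  · exact (isOpen_Ioo (a := a) (b := b)).preimage Rat.continuous_coe_real

end rat

section sep

/-- Separating irrational points converging to `0`. -/
noncomputable def sep (n : ℕ) : ℝ := Real.sqrt 2 / 2 ^ (n + 1)

lemma sep_pos (n : ℕ) : 0 < sep n := by
  have : (0:ℝ) < Real.sqrt 2 := Real.sqrt_pos.mpr (by norm_num)
  unfold sep
  positivity

lemma sep_anti : StrictAnti sep := by
  intro m n hmn
  apply div_lt_div_of_pos_left (Real.sqrt_pos.mpr (by norm_num)) (by positivity)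
  exact pow_lt_pow_right₀ (by norm_num) (by omega)

lemma sep_le_of_le {m n : ℕ} (h : m ≤ n) : sep n ≤ sep m := by
  rcases eq_or_lt_of_le h with rfl | h
  · exact le_rfl
  · exact (sep_anti h).le

lemma sep_lt_one (n : ℕ) : sep n < 1 := by
  have h2 : Real.sqrt 2 < 2 := by
    nlinarith [Real.sq_sqrt (by norm_num : (2:ℝ) ≥ 0), Real.sqrt_nonneg 2]
  have h3 : (2:ℝ) ≤ 2 ^ (n+1) := by
    calc (2:ℝ) = 2^1 := by norm_num
    _ ≤ 2^(n+1) := by exact pow_le_pow_right₀ (by norm_num) (by omega)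
  unfold sep
  rw [div_lt_one (by positivity)]
  linarith

lemma irrational_sep (n : ℕ) : Irrational (sep n) := by
  have := irrational_sqrt_two.div_ratCast (q := 2 ^ (n+1)) (by positivity)
  unfold sep
  convert this using 2
  push_cast
  ring

lemma exists_sep_lt {ε : ℝ} (hε : 0 < ε) : ∃ m, sep m < ε := by
  obtain ⟨m, hm⟩ := exists_pow_lt_of_lt_one hε (by norm_num : (1:ℝ)/2 < 1)
  refine ⟨m, ?_⟩
  have h2 : Real.sqrt 2 < 2 := by
    nlinarith [Real.sq_sqrt (by norm_num : (2:ℝ) ≥ 0), Real.sqrt_nonneg 2]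
  have : sep m < 2 / 2 ^ (m+1) := by
    apply div_lt_div_of_pos_right h2 ?_ -- maybe wrong name
    positivity
  have h4 : (2:ℝ) / 2 ^ (m+1) = (1/2) ^ m := by
    rw [div_pow, one_pow, pow_succ]
    field_simp
  linarith [this, h4 ▸ hm]

end sep

section compactness

lemma mem_QI_real {a b : ℝ} {q : ℚ} : q ∈ QI a b ↔ a < (q:ℝ) ∧ (q:ℝ) < b := Iff.rfl

/-- A union of compact pieces trapped between the separators, together with `0`,
is compact in `ℚ`. -/
lemma isCompact_pieces (S : ℕ → Set ℚ) (hcomp : ∀ n, IsCompact (S n))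
    (hsub : ∀ n, S n ⊆ QI (sep (n+1)) (sep n)) :
    IsCompact ({0} ∪ ⋃ n, S n : Set ℚ) := by
  rw [Rat.isEmbedding_coe_real.isCompact_iff]
  set T : ℕ → Set ℝ := fun n => ((↑) : ℚ → ℝ) '' S n with hT
  have himg : ((↑) : ℚ → ℝ) '' ({0} ∪ ⋃ n, S n) = {0} ∪ ⋃ n, T n := by
    rw [Set.image_union, Set.image_iUnion, Set.image_singleton, Rat.cast_zero]
  rw [himg]
  have hTcomp : ∀ n, IsCompact (T n) := fun n => (hcomp n).image Rat.continuous_coe_real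
  have hTsub : ∀ n, T n ⊆ Ioo (sep (n+1)) (sep n) := by
    rintro n x ⟨q, hq, rfl⟩
    exact (hsub n) hq
  have hbd : ({0} ∪ ⋃ n, T n : Set ℝ) ⊆ Icc 0 1 := by
    rintro x (rfl | hx)
    · exact ⟨le_rfl, zero_le_one⟩
    · obtain ⟨n, hn⟩ := mem_iUnion.1 hx
      have := hTsub n hn
      exact ⟨(sep_pos (n+1)).le.trans this.1.le, (this.2.trans (sep_lt_one n)).le⟩
  apply Metric.isCompact_of_isClosed_isBounded
  · -- closedness
    rw [← closure_eq_iff_isClosed]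
    apply subset_antisymm _ subset_closure
    intro y hy
    have hy01 : y ∈ Icc (0:ℝ) 1 := (closure_mono hbd).trans isClosed_Icc.closure_eq.subset hy
    rcases eq_or_ne y 0 with rfl | hy0
    · exact Or.inl rfl
    have hypos : 0 < y := lt_of_le_of_ne hy01.1 (Ne.symm hy0)
    obtain ⟨N, hN⟩ := exists_sep_lt hypos
    set F : Set ℝ := ⋃ n ∈ Finset.range N, T n with hF
    have hFclosed : IsClosed F := isClosed_biUnion_finset fun i _ => (hTcomp i).isClosed
    have hsplit : ({0} ∪ ⋃ n, T n : Set ℝ) ⊆ Iic (sep N) ∪ F := by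
      rintro x (rfl | hx)
      · exact Or.inl (sep_pos N).le
      obtain ⟨n, hn⟩ := mem_iUnion.1 hx
      rcases lt_or_ge n N with h | h
      · exact Or.inr (mem_biUnion (Finset.mem_range.2 h) hn)
      · exact Or.inl (((hTsub n hn).2.trans_le (sep_le_of_le h)).le)
    have := (closure_mono hsplit).trans
      (isClosed_Iic.union hFclosed).closure_eq.subset hy
    rcases this with h | h
    · exact absurd (h.trans_lt hN) (lt_irrefl y)
    · refine Or.inr ?_
      obtain ⟨n, _, hn⟩ := mem_iUnion₂.1 h
      exact mem_iUnion.2 ⟨n, hn⟩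
  · exact (Metric.isBounded_Icc (0:ℝ) 1).subset hbd

end compactness

section main

/-- `K` is a "good" witness for ordinal `α`: compact, countable, inside `[0,1]`,
with `α`-th Cantor–Bendixson derivative exactly `{0}`. -/
def Good (α : Ordinal) (K : Set ℚ) : Prop :=
  IsCompact K ∧ K.Countable ∧ (∀ q ∈ K, 0 ≤ q ∧ q ≤ 1) ∧ cbDeriv K α = {0}

lemma step (α : Ordinal) (f : ℕ → Ordinal) (hf : ∀ n, f n < α)
    (hcof : ∀ γ < α, ∀ m : ℕ, ∃ n, m ≤ n ∧ γ ≤ f n)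
    (Ks : ℕ → Set ℚ) (hK : ∀ n, Good (f n) (Ks n)) :
    ∃ K : Set ℚ, Good α K := by
  -- choose affine parameters
  have hchoice : ∀ n : ℕ, ∃ c r : ℚ, 0 < r ∧ sep (n+1) < (c:ℝ) ∧ ((c:ℝ) + (r:ℝ)) < sep n := by
    intro n
    obtain ⟨c, hc1, hc2⟩ := exists_rat_btwn (sep_anti (Nat.lt_succ_self n))
    obtain ⟨q2, h1, h2⟩ := exists_rat_btwn hc2
    refine ⟨c, q2 - c, ?_, hc1, by push_cast; linarith⟩
    have : (c:ℝ) < (q2:ℝ) := h1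
    rw [← Rat.cast_lt (K := ℝ)]
    push_cast
    linarith
  choose c r hr hc1 hcr using hchoice
  set e : ℕ → (ℚ ≃ₜ ℚ) := fun n => affQ (c n) (r n) (hr n).ne' with he
  set C : ℕ → Set ℚ := fun n => e n '' Ks n with hC
  set K : Set ℚ := {0} ∪ ⋃ n, C n with hKdef
  have hCsub : ∀ n, C n ⊆ QI (sep (n+1)) (sep n) := by
    rintro n x ⟨q, hq, rfl⟩
    obtain ⟨hq0, hq1⟩ := (hK n).2.2.1 q hq
    have hrn := hr n
    have h1 : (c n : ℝ) ≤ ((e n q : ℚ) : ℝ) := by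
      show (c n : ℝ) ≤ ((c n + r n * q : ℚ) : ℝ)
      push_cast
      nlinarith [(by exact_mod_cast hq0 : (0:ℝ) ≤ (q:ℝ)), (by exact_mod_cast hrn : (0:ℝ) < (r n:ℝ))]
    have h2 : ((e n q : ℚ) : ℝ) ≤ (c n : ℝ) + (r n : ℝ) := by
      show ((c n + r n * q : ℚ) : ℝ) ≤ _
      push_cast
      nlinarith [(by exact_mod_cast hq1 : (q:ℝ) ≤ 1), (by exact_mod_cast hrn : (0:ℝ) < (r n:ℝ))]
    exact ⟨(hc1 n).trans_le h1, h2.trans_lt (hcr n)⟩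
  have hCcomp : ∀ n, IsCompact (C n) := fun n => (hK n).1.image (e n).continuous
  have hCclosed : ∀ n, IsClosed (C n) := fun n => (hCcomp n).isClosed
  have hKcomp : IsCompact K := isCompact_pieces C hCcomp hCsub
  have hKclosed : IsClosed K := hKcomp.isClosed
  have hKcount : K.Countable := by
    refine (countable_singleton 0).union (countable_iUnion fun n => ?_)
    exact ((hK n).2.1).image _
  have hKbounds : ∀ q ∈ K, 0 ≤ q ∧ q ≤ 1 := by
    rintro q (rfl | hq)
    · exact ⟨le_rfl, zero_le_one⟩
    · obtain ⟨n, hn⟩ := mem_iUnion.1 hq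
      obtain ⟨h1, h2⟩ := hCsub n hn
      have h0 : (0:ℝ) < (q:ℝ) := (sep_pos (n+1)).trans h1
      have h3 : (q:ℝ) < 1 := h2.trans (sep_lt_one n)
      constructor
      · exact_mod_cast h0.le
      · exact_mod_cast h3.le
  have hUclopen : ∀ n, IsClopen (QI (sep (n+1)) (sep n)) :=
    fun n => isClopen_QI (irrational_sep (n+1)) (irrational_sep n)
  have hKU : ∀ n, K ∩ QI (sep (n+1)) (sep n) = C n := by
    intro n
    apply subset_antisymm
    · rintro x ⟨(rfl | hx), hxU⟩
      · have h := hxU.1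
        norm_num at h
        exact absurd h (not_lt.2 (sep_pos (n+1)).le)
      · obtain ⟨m, hm⟩ := mem_iUnion.1 hx
        rcases eq_or_ne m n with rfl | hmn
        · exact hm
        · exfalso
          obtain ⟨ha, hb⟩ := hCsub m hm
          obtain ⟨ha', hb'⟩ := hxU
          rcases lt_or_gt_of_ne hmn with h | h
          · have : sep n ≤ sep (m+1) := sep_le_of_le h
            linarith
          · have : sep m ≤ sep (n+1) := sep_le_of_le h
            linarith
    · exact fun x hx => ⟨Or.inr (mem_iUnion.2 ⟨n, hx⟩), hCsub n hx⟩
  have hCderiv : ∀ n, cbDeriv (C n) (f n) = {c n} := by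
    intro n
    rw [hC]
    simp only
    rw [cbDeriv_image (e n), (hK n).2.2.2, Set.image_singleton]
    congr 1
    show c n + r n * 0 = c n
    ring
  have hCK : ∀ n, C n ⊆ K := fun n => (subset_iUnion C n).trans subset_union_right
  -- 0 belongs to every derivative up to α
  have hzero : ∀ β ≤ α, (0:ℚ) ∈ cbDeriv K β := by
    intro β
    induction β using Ordinal.induction with
    | h β IH =>
      intro hβα
      rcases Ordinal.zero_or_succ_or_isSuccLimit β with rfl | ⟨γ, rfl⟩ | hβ
      · rw [cbDeriv_zero]; exact Or.inl rfl
      · have hγ : γ < α := lt_of_lt_of_le (Order.lt_succ γ) hβα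
        rw [cbDeriv_succ, mem_derivedSet, accPt_iff_nhds]
        intro V hV
        obtain ⟨ε, hε, hball⟩ := Metric.mem_nhds_iff.1 hV
        obtain ⟨m, hm⟩ := exists_sep_lt hε
        obtain ⟨n, hmn, hγn⟩ := hcof γ hγ m
        refine ⟨c n, ⟨?_, ?_⟩, ?_⟩
        · apply hball
          have hlt : (c n : ℝ) < sep n := by
            have h1 := hcr n
            have h2 : (0:ℝ) < (r n : ℝ) := by exact_mod_cast hr n
            linarith
          have hpos : (0:ℝ) < (c n : ℝ) := (sep_pos (n+1)).trans (hc1 n)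
          rw [Metric.mem_ball, ← Rat.dist_cast, Rat.cast_zero, dist_zero_right,
            Real.norm_eq_abs, abs_of_pos hpos]
          calc (c n : ℝ) < sep n := hlt
            _ ≤ sep m := sep_le_of_le hmn
            _ < ε := hm
        · have h1 : c n ∈ cbDeriv (C n) (f n) := by rw [hCderiv n]; exact rfl
          have h2 : cbDeriv (C n) (f n) ⊆ cbDeriv (C n) γ :=
            cbDeriv_antitone (hCclosed n) hγn
          exact cbDeriv_mono (hCK n) γ (h2 h1)
        · have : (0:ℝ) < (c n : ℝ) := (sep_pos (n+1)).trans (hc1 n)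
          intro h
          rw [h] at this
          simp at this
      · rw [cbDeriv_limit _ hβ]
        exact mem_iInter₂.2 fun γ hγ => IH γ hγ (hγ.le.trans hβα)
  -- the derivative at α is contained in {0}
  have hsub0 : cbDeriv K α ⊆ {0} := by
    intro x hx
    have hxK : x ∈ K := by
      have := cbDeriv_antitone hKclosed (zero_le (a := α)) hx
      rwa [cbDeriv_zero] at this
    rcases hxK with rfl | hxC
    · rfl
    exfalso
    obtain ⟨n, hn⟩ := mem_iUnion.1 hxC
    have hx2 : x ∈ cbDeriv K α ∩ QI (sep (n+1)) (sep n) := ⟨hx, hCsub n hn⟩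
    rw [← cbDeriv_inter_clopen (hUclopen n), hKU n] at hx2
    have hx3 : x ∈ cbDeriv (C n) (Order.succ (f n)) :=
      cbDeriv_antitone (hCclosed n) (Order.succ_le_iff.2 (hf n)) hx2
    rw [cbDeriv_succ, hCderiv n, derivedSet_singleton] at hx3
    exact hx3
  exact ⟨K, hKcomp, hKcount, hKbounds,
    subset_antisymm hsub0 (singleton_subset_iff.2 (hzero α le_rfl))⟩

end main

lemma good_exists (α : Ordinal) (hα : α < ω_ 1) : ∃ K : Set ℚ, Good α K := by
  induction α using Ordinal.induction with
  | h α IH =>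
    rcases eq_or_ne α 0 with rfl | hα0
    · refine ⟨{0}, isCompact_singleton, countable_singleton 0, ?_, by simp⟩
      rintro q rfl
      exact ⟨le_rfl, zero_le_one⟩
    · have hcard : α.card < Cardinal.aleph 1 := by
        rw [← Cardinal.lt_ord, Cardinal.ord_aleph]
        exact hα
      have hcount : (Set.Iio α).Countable := by
        rw [← Cardinal.le_aleph0_iff_set_countable, Ordinal.mk_Iio_ordinal,
          Cardinal.lift_le_aleph0]
        exact Order.lt_succ_iff.1 (by rwa [Cardinal.succ_aleph0])
      haveI := hcount.to_subtype
      have hne : (Set.Iio α).Nonempty := ⟨0, pos_iff_ne_zero.2 hα0⟩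
      haveI : Nonempty (Set.Iio α) := hne.to_subtype
      obtain ⟨g, hg⟩ := exists_surjective_nat (Set.Iio α)
      set f : ℕ → Ordinal := fun n => (g (Nat.unpair n).1).1 with hfdef
      have hf : ∀ n, f n < α := fun n => (g (Nat.unpair n).1).2
      have hcof : ∀ γ < α, ∀ m : ℕ, ∃ n, m ≤ n ∧ γ ≤ f n := by
        intro γ hγ m
        obtain ⟨k, hk⟩ := hg ⟨γ, hγ⟩
        refine ⟨Nat.pair k m, Nat.right_le_pair k m, ?_⟩
        rw [hfdef]
        simp only [Nat.unpair_pair, hk]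
        exact le_rfl
      have hKs : ∀ n, ∃ Kn, Good (f n) Kn := fun n => IH (f n) (hf n) ((hf n).trans hα)
      choose Ks hKs using hKs
      exact step α f hf hcof Ks hKs

lemma irrational_sqrt2_div4 : Irrational (Real.sqrt 2 / 4) := by
  simpa using irrational_sqrt_two.div_natCast (by norm_num : (4:ℕ) ≠ 0)

theorem stmt16 (α : Ordinal) (hαcount : α < ω_ 1) (p : ℕ) :
    ∃ K : Set ℚ, IsCompact K ∧ K.Countable ∧
      (cbDeriv K α).Finite ∧ (cbDeriv K α).ncard = p := by
  rcases Nat.eq_zero_or_pos p with rfl | hp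
  · exact ⟨∅, isCompact_empty, countable_empty,
      by rw [cbDeriv_empty]; exact finite_empty, by rw [cbDeriv_empty]; simp⟩
  obtain ⟨K₀, hK₀comp, hK₀count, hK₀bound, hK₀deriv⟩ := good_exists α hαcount
  set eI : ℕ → (ℚ ≃ₜ ℚ) := fun i => affQ (i : ℚ) (1/4) (by norm_num) with heI
  set Ki : ℕ → Set ℚ := fun i => eI i '' K₀ with hKi
  set K : Set ℚ := ⋃ i ∈ Finset.range p, Ki i with hKdef
  set U : ℕ → Set ℚ := fun i => QI ((i:ℝ) - Real.sqrt 2 / 4) ((i:ℝ) + Real.sqrt 2 / 4)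
    with hU
  have hsqrt2 : (1:ℝ) < Real.sqrt 2 := by
    nlinarith [Real.sq_sqrt (by norm_num : (2:ℝ) ≥ 0), Real.sqrt_nonneg 2]
  have hsqrt2' : Real.sqrt 2 < 2 := by
    nlinarith [Real.sq_sqrt (by norm_num : (2:ℝ) ≥ 0), Real.sqrt_nonneg 2]
  have hUclopen : ∀ i, IsClopen (U i) := fun i =>
    isClopen_QI (irrational_sqrt2_div4.natCast_sub i) (irrational_sqrt2_div4.natCast_add i)
  have hKiBound : ∀ i, ∀ x ∈ Ki i, (i:ℝ) ≤ (x:ℝ) ∧ (x:ℝ) ≤ (i:ℝ) + 1/4 := by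
    rintro i x ⟨q, hq, rfl⟩
    obtain ⟨hq0, hq1⟩ := hK₀bound q hq
    have h0 : (0:ℝ) ≤ (q:ℝ) := by exact_mod_cast hq0
    have h1 : (q:ℝ) ≤ 1 := by exact_mod_cast hq1
    constructor
    · show (i:ℝ) ≤ ((i + 1/4 * q : ℚ) : ℝ)
      push_cast
      nlinarith
    · show ((i + 1/4 * q : ℚ) : ℝ) ≤ _
      push_cast
      nlinarith
  have hKiU : ∀ i, Ki i ⊆ U i := by
    intro i x hx
    obtain ⟨h1, h2⟩ := hKiBound i x hx
    refine ⟨by linarith, by linarith⟩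
  have hdisj : ∀ i j, j ≠ i → Ki j ∩ U i = ∅ := by
    intro i j hne
    rw [eq_empty_iff_forall_notMem]
    rintro x ⟨hxj, hxU⟩
    obtain ⟨h1, h2⟩ := hKiBound j x hxj
    obtain ⟨h3, h4⟩ := hxU
    rcases lt_or_gt_of_ne hne with h | h
    · have : (j:ℝ) + 1 ≤ (i:ℝ) := by exact_mod_cast Nat.succ_le_of_lt h
      linarith
    · have : (i:ℝ) + 1 ≤ (j:ℝ) := by exact_mod_cast Nat.succ_le_of_lt h
      linarith
  have hKcomp : IsCompact K :=
    (Finset.range p).isCompact_biUnion fun i _ => hK₀comp.image (eI i).continuous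
  have hKclosed : IsClosed K := hKcomp.isClosed
  have hKU : ∀ i ∈ Finset.range p, K ∩ U i = Ki i := by
    intro i hi
    apply subset_antisymm
    · rintro x ⟨hxK, hxU⟩
      obtain ⟨j, hj, hxj⟩ := mem_iUnion₂.1 hxK
      rcases eq_or_ne j i with rfl | hne
      · exact hxj
      · exfalso
        have hmem : x ∈ Ki j ∩ U i := ⟨hxj, hxU⟩
        rw [hdisj i j hne] at hmem
        exact hmem
    · exact fun x hx => ⟨mem_iUnion₂.2 ⟨i, hi, hx⟩, hKiU i hx⟩
  have hKideriv : ∀ i, cbDeriv (Ki i) α = {(i:ℚ)} := by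
    intro i
    rw [hKi]
    simp only
    rw [cbDeriv_image (eI i), hK₀deriv, Set.image_singleton]
    congr 1
    show (i:ℚ) + 1/4 * 0 = (i:ℚ)
    ring
  have hderiv : cbDeriv K α = (fun i : ℕ => (i:ℚ)) '' ((Finset.range p : Finset ℕ) : Set ℕ) := by
    apply subset_antisymm
    · intro x hx
      have hxK : x ∈ K := by
        have := cbDeriv_antitone hKclosed (zero_le (a := α)) hx
        rwa [cbDeriv_zero] at this
      obtain ⟨i, hi, hxi⟩ := mem_iUnion₂.1 hxK
      have hx2 : x ∈ cbDeriv K α ∩ U i := ⟨hx, hKiU i hxi⟩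
      rw [← cbDeriv_inter_clopen (hUclopen i), hKU i hi, hKideriv i] at hx2
      exact ⟨i, by exact_mod_cast hi, hx2.symm ▸ rfl⟩
    · rintro x ⟨i, hi, rfl⟩
      have h1 : (i:ℚ) ∈ cbDeriv (Ki i) α := by rw [hKideriv i]; rfl
      exact cbDeriv_mono (fun y hy => mem_iUnion₂.2 ⟨i, hi, hy⟩) α h1
  refine ⟨K, hKcomp, ?_, ?_, ?_⟩
  · exact (Finset.range p).countable_toSet.biUnion fun i _ => hK₀count.image _
  · rw [hderiv]
    exact ((Finset.range p).finite_toSet).image _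
  · rw [hderiv, Set.ncard_image_of_injective _ (fun a b h => by exact_mod_cast h),
      Set.ncard_coe_finset, Finset.card_range]
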